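/- Let H be a Raikov complete normal subgroup of a Hausdorff topological group G such that the quotient group G/H is a minimal topological group. Then H is a key subgroup of G. -/

import Mathlib

open Topology

/-- Subspace topology induced on a subgroup `H` by a topology `t` on `G`. -/
def subTop {G : Type*} [Group G] (t : TopologicalSpace G) (H : Subgroup G) :
    TopologicalSpace H :=
  t.induced ((↑) : H → G)

/-- Quotient topology on the coset space `G ⧸ H` induced by a topology `t` on `G`. -/
def quotTop {G : Type*} [Group G] (t : TopologicalSpace G) (H : Subgroup G) :
    TopologicalSpace (G ⧸ H) :=
  t.coinduced (QuotientGroup.mk : G → G ⧸ H)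

/-- `H` is a key subgroup of `(G, γ)`: every coarser Hausdorff group topology `γ₁`
(`γ ≤ γ₁` in Mathlib's order means `γ₁` is coarser than `γ`) inducing the original
subspace topology on `H` coincides with `γ`. -/
def IsKey {G : Type*} [Group G] (γ : TopologicalSpace G) (H : Subgroup G) : Prop :=
  ∀ γ₁ : TopologicalSpace G, γ ≤ γ₁ → @IsTopologicalGroup G γ₁ _ → @T2Space G γ₁ →
    subTop γ₁ H = subTop γ H → γ₁ = γ

/-- `H` is a co-key subgroup of `(G, γ)`: every coarser Hausdorff group topology `γ₁`
inducing the original quotient topology on `G ⧸ H` coincides with `γ`. -/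
def IsCoKey {G : Type*} [Group G] (γ : TopologicalSpace G) (H : Subgroup G) : Prop :=
  ∀ γ₁ : TopologicalSpace G, γ ≤ γ₁ → @IsTopologicalGroup G γ₁ _ → @T2Space G γ₁ →
    quotTop γ₁ H = quotTop γ H → γ₁ = γ

/-- `H` is relatively minimal in `(G, γ)`: every coarser Hausdorff group topology on `G`
induces the original subspace topology on `H`. -/
def IsRelMin {G : Type*} [Group G] (γ : TopologicalSpace G) (H : Subgroup G) : Prop :=
  ∀ γ₁ : TopologicalSpace G, γ ≤ γ₁ → @IsTopologicalGroup G γ₁ _ → @T2Space G γ₁ →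
    subTop γ₁ H = subTop γ H

/-- `H` is co-minimal in `(G, γ)`: every coarser Hausdorff group topology on `G`
induces the original quotient topology on the coset space `G ⧸ H`. -/
def IsCoMin {G : Type*} [Group G] (γ : TopologicalSpace G) (H : Subgroup G) : Prop :=
  ∀ γ₁ : TopologicalSpace G, γ ≤ γ₁ → @IsTopologicalGroup G γ₁ _ → @T2Space G γ₁ →
    quotTop γ₁ H = quotTop γ H

/-- `(X, γ)` is a minimal topological group: no strictly coarser Hausdorff group topology. -/
def IsMinimalGroup {X : Type*} [Group X] (γ : TopologicalSpace X) : Prop :=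
  ∀ γ₁ : TopologicalSpace X, γ ≤ γ₁ → @IsTopologicalGroup X γ₁ _ → @T2Space X γ₁ → γ₁ = γ

/-- The two-sided (Raikov) uniformity filter of a group topology. -/
def twoSidedUniformity {X : Type*} [Group X] (t : TopologicalSpace X) : Filter (X × X) :=
  Filter.comap (fun p : X × X => p.2 / p.1) (@nhds X t 1) ⊓
    Filter.comap (fun p : X × X => p.1⁻¹ * p.2) (@nhds X t 1)

/-- Raikov completeness: every Cauchy filter with respect to the two-sided uniformity
converges. -/
def RaikovComplete {X : Type*} [Group X] (t : TopologicalSpace X) : Prop :=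
  ∀ f : Filter X, f.NeBot → f ×ˢ f ≤ twoSidedUniformity t → ∃ x, f ≤ @nhds X t x

open Filter Set Pointwise in
/-- A Raikov complete subgroup of a Hausdorff topological group is closed. -/
lemma closed_of_raikov' {G : Type*} [Group G] (γ₁ : TopologicalSpace G)
    (hg : @IsTopologicalGroup G γ₁ _) (ht : @T2Space G γ₁) (H : Subgroup G)
    (hR : RaikovComplete (subTop γ₁ H)) : IsClosed[γ₁] (H : Set G) := by
  letI := γ₁
  haveI := hg; haveI := ht
  refine isClosed_of_closure_subset fun x hx => ?_
  set f : Filter H := Filter.comap (Subtype.val : H → G) (𝓝 x) with hf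
  have hfne : f.NeBot := by
    refine Filter.comap_neBot fun t ht' => ?_
    rcases mem_closure_iff_nhds.mp hx t ht' with ⟨y, hy1, hy2⟩
    exact ⟨⟨y, hy2⟩, hy1⟩
  have hcoef : Filter.Tendsto (Subtype.val : H → G) f (𝓝 x) := tendsto_comap
  have hnh1 : @nhds H (subTop γ₁ H) 1 = Filter.comap (Subtype.val : H → G) (𝓝 (1 : G)) := by
    rw [show subTop γ₁ H = TopologicalSpace.induced (Subtype.val : H → G) γ₁ from rfl,
      nhds_induced]
    rfl
  have hcauchy : f ×ˢ f ≤ twoSidedUniformity (subTop γ₁ H) := by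
    refine le_inf ?_ ?_
    · rw [hnh1, Filter.comap_comap, ← Filter.map_le_iff_le_comap]
      have : Filter.Tendsto (fun p : H × H => (p.2 : G) / (p.1 : G)) (f ×ˢ f)
          (𝓝 (x / x)) := (hcoef.comp tendsto_snd).div' (hcoef.comp tendsto_fst)
      rw [div_self' x] at this
      exact this
    · rw [hnh1, Filter.comap_comap, ← Filter.map_le_iff_le_comap]
      have : Filter.Tendsto (fun p : H × H => (p.1 : G)⁻¹ * (p.2 : G)) (f ×ˢ f)
          (𝓝 (x⁻¹ * x)) := (hcoef.comp tendsto_fst).inv.mul (hcoef.comp tendsto_snd)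
      rw [inv_mul_cancel] at this
      exact this
  obtain ⟨h, hfh⟩ := hR f hfne hcauchy
  have hnhh : @nhds H (subTop γ₁ H) h = Filter.comap (Subtype.val : H → G) (𝓝 (h : G)) := by
    rw [show subTop γ₁ H = TopologicalSpace.induced (Subtype.val : H → G) γ₁ from rfl,
      nhds_induced]
  have h1 : Filter.Tendsto (Subtype.val : H → G) f (𝓝 (h : G)) := by
    rw [Filter.tendsto_iff_comap, ← hnhh]; exact hfh
  have := tendsto_nhds_unique hcoef h1
  rw [this]; exact h.2

open Filter Set Pointwise in
/-- Merson's lemma: a coarser group topology agreeing on a subgroup and on the quotient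
coincides with the original topology. -/
lemma merson' {G : Type*} [Group G] (γ γ₁ : TopologicalSpace G)
    (hγ : @IsTopologicalGroup G γ _) (hγ₁ : @IsTopologicalGroup G γ₁ _) (H : Subgroup G)
    (hle : γ ≤ γ₁) (hsub : subTop γ₁ H = subTop γ H) (hquot : quotTop γ₁ H = quotTop γ H) :
    γ₁ = γ := by
  refine IsTopologicalGroup.ext hγ₁ hγ ?_
  refine le_antisymm ?_ (nhds_mono hle)
  intro U hU
  -- Step 1: V open in γ with V * V ⊆ U
  obtain ⟨V, hVo, hV1, hVU⟩ : ∃ V : Set G, IsOpen[γ] V ∧ (1 : G) ∈ V ∧ V * V ⊆ U := by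
    letI := γ; haveI := hγ
    exact exists_open_nhds_one_mul_subset hU
  -- Step 2: O ∈ 𝓝[γ₁] 1 with O ∩ H ⊆ V
  obtain ⟨O, hO, hOV⟩ : ∃ O ∈ @nhds G γ₁ 1, ∀ g : G, g ∈ H → g ∈ O → g ∈ V := by
    have e1 : @nhds H (subTop γ H) 1 = Filter.comap (Subtype.val : H → G) (@nhds G γ 1) := by
      letI := γ; exact nhds_induced Subtype.val 1
    have e2 : @nhds H (subTop γ₁ H) 1 = Filter.comap (Subtype.val : H → G) (@nhds G γ₁ 1) := by
      letI := γ₁; exact nhds_induced Subtype.val 1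
    have hmem : (Subtype.val ⁻¹' V : Set H) ∈ @nhds H (subTop γ H) 1 := by
      rw [e1]
      exact Filter.preimage_mem_comap (by
        letI := γ; exact hVo.mem_nhds hV1)
    rw [← hsub, e2] at hmem
    obtain ⟨O, hO, hOV⟩ := Filter.mem_comap.mp hmem
    exact ⟨O, hO, fun g hgH hgO => hOV (show (⟨g, hgH⟩ : H) ∈ Subtype.val ⁻¹' O from hgO)⟩
  -- Step 3: P open in γ₁, symmetric enough: P⁻¹ * P ⊆ O
  obtain ⟨P, hPo, hP1, hPPO⟩ : ∃ P : Set G, IsOpen[γ₁] P ∧ (1 : G) ∈ P ∧ P⁻¹ * P ⊆ O := by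
    letI := γ₁; haveI := hγ₁
    obtain ⟨W, hWo, hW1, hWW⟩ := exists_open_nhds_one_mul_subset hO
    refine ⟨W ∩ W⁻¹, hWo.inter hWo.inv, ⟨hW1, by simpa using hW1⟩, ?_⟩
    rintro z ⟨a, ha, b, hb, rfl⟩
    have haW : a ∈ W := by simpa using (Set.mem_inv.mp ha).2
    exact hWW ⟨a, haW, b, hb.1, rfl⟩
  -- Step 4: Q = V ∩ P, S = Q * H is γ-open and saturated
  set Q : Set G := V ∩ P with hQ
  have hQo : IsOpen[γ] Q := by letI := γ; exact hVo.inter (hPo.mono hle)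
  set S : Set G := Q * (H : Set G) with hS
  have hSo : IsOpen[γ] S := by letI := γ; haveI := hγ; exact hQo.mul_right
  have hsat : (QuotientGroup.mk : G → G ⧸ H) ⁻¹' (QuotientGroup.mk '' S) = S := by
    apply Set.Subset.antisymm
    · rintro z hz
      obtain ⟨y, hyS, hyz⟩ := hz
      obtain ⟨q, hq, a, ha, rfl⟩ := hyS
      have hmem : (q * a)⁻¹ * z ∈ H := QuotientGroup.eq.mp hyz
      refine ⟨q, hq, a * ((q * a)⁻¹ * z), H.mul_mem ha hmem, ?_⟩
      group
    · exact Set.subset_preimage_image _ _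
  -- Step 5: S is γ₁-open
  have hSo₁ : IsOpen[γ₁] S := by
    have h1 : IsOpen[quotTop γ H] (QuotientGroup.mk '' S) := by
      rw [show quotTop γ H = γ.coinduced (QuotientGroup.mk : G → G ⧸ H) from rfl]
      rw [isOpen_coinduced, hsat]
      exact hSo
    rw [← hquot, show quotTop γ₁ H = γ₁.coinduced (QuotientGroup.mk : G → G ⧸ H) from rfl,
      isOpen_coinduced, hsat] at h1
    exact h1
  have hS1 : (1 : G) ∈ S := ⟨1, ⟨hV1, hP1⟩, 1, H.one_mem, mul_one 1⟩
  -- Step 6: S ∩ P ⊆ U and conclude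
  have hsubU : S ∩ P ⊆ U := by
    rintro z ⟨⟨q, hq, a, ha, rfl⟩, hzP⟩
    have haO : a ∈ O := by
      have : q⁻¹ * (q * a) ∈ P⁻¹ * P := ⟨q⁻¹, by simpa using hq.2, q * a, hzP, rfl⟩
      simpa using hPPO this
    exact hVU ⟨q, hq.1, a, hOV a ha haO, rfl⟩
  letI := γ₁
  exact Filter.mem_of_superset ((hSo₁.inter hPo).mem_nhds ⟨hS1, hP1⟩) hsubU

/-- A Raikov complete normal subgroup with minimal quotient group is a key subgroup. -/
theorem isKey_of_raikovComplete_normal_minimal_quotient {G : Type*} [Group G]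
    (γ : TopologicalSpace G) (hγ : @IsTopologicalGroup G γ _) (hT2 : @T2Space G γ)
    (H : Subgroup G) [H.Normal] (hR : RaikovComplete (subTop γ H))
    (hmin : IsMinimalGroup (quotTop γ H)) :
    IsKey γ H := by
  intro γ₁ hle hγ₁ ht2 hsub
  have hR₁ : RaikovComplete (subTop γ₁ H) := by rw [hsub]; exact hR
  have hcl : IsClosed[γ₁] (H : Set G) := closed_of_raikov' γ₁ hγ₁ ht2 H hR₁
  have hquot : quotTop γ₁ H = quotTop γ H := by
    refine hmin (quotTop γ₁ H) (coinduced_mono hle) ?_ ?_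
    · letI := γ₁; haveI := hγ₁
      exact QuotientGroup.instIsTopologicalGroup H
    · letI := γ₁; haveI := hγ₁; haveI := ht2; haveI : IsClosed (H : Set G) := hcl
      exact (inferInstance : T2Space (G ⧸ H))
  exact merson' γ γ₁ hγ hγ₁ H hle hsub hquot
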